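/- For scalar bounded coercive spectral densities Φ, Ψ on the unit circle, the multivariable Hellinger distance inf{‖w_φ − w_ψ‖₂ : |w_φ|² = Φ, |w_ψ|² = Ψ} equals [∫ (√Φ − √Ψ)² dθ/2π]^{1/2}. -/

import Mathlib

open MeasureTheory

/-- Normalized Lebesgue measure dθ/2π on one period, modeling the unit circle. -/
noncomputable def muT : Measure ℝ :=
  (ENNReal.ofReal (2 * Real.pi)⁻¹) • (volume.restrict (Set.Ioc 0 (2 * Real.pi)))

/-- w ∈ L₂(𝕋) is a scalar spectral factor of the density Φ : |w|² = Φ a.e. -/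
def IsScalarFactor (w : ℝ → ℂ) (Φ : ℝ → ℝ) : Prop :=
  Measurable w ∧ Integrable (fun θ => ‖w θ‖ ^ 2) muT ∧
  (∀ᵐ θ ∂muT, ‖w θ‖ ^ 2 = Φ θ)

instance : IsFiniteMeasure muT := by
  refine ⟨?_⟩
  rw [muT, Measure.smul_apply, smul_eq_mul,
    Measure.restrict_apply MeasurableSet.univ, Set.univ_inter, Real.volume_Ioc]
  exact ENNReal.mul_lt_top ENNReal.ofReal_lt_top ENNReal.ofReal_lt_top

lemma integrable_of_bdd {f : ℝ → ℝ} (hm : Measurable f) {C : ℝ} (h : ∀ θ, |f θ| ≤ C) :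
    Integrable f muT :=
  ⟨hm.aestronglyMeasurable, HasFiniteIntegral.of_bounded (C := C) (ae_of_all _ h)⟩

theorem stmt_11 (Φ Ψ : ℝ → ℝ)
    (hΦm : Measurable Φ) (hΨm : Measurable Ψ)
    (hΦp : Function.Periodic Φ (2 * Real.pi)) (hΨp : Function.Periodic Ψ (2 * Real.pi))
    (hΦb : ∃ C : ℝ, ∀ θ, Φ θ ≤ C) (hΨb : ∃ C : ℝ, ∀ θ, Ψ θ ≤ C)
    (hΦc : ∃ c : ℝ, 0 < c ∧ ∀ θ, c ≤ Φ θ) (hΨc : ∃ c : ℝ, 0 < c ∧ ∀ θ, c ≤ Ψ θ) :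
    sInf {r : ℝ | ∃ wφ wψ, IsScalarFactor wφ Φ ∧ IsScalarFactor wψ Ψ ∧
        r = Real.sqrt (∫ θ, ‖wφ θ - wψ θ‖ ^ 2 ∂muT)} =
      Real.sqrt (∫ θ, (Real.sqrt (Φ θ) - Real.sqrt (Ψ θ)) ^ 2 ∂muT) := by
  obtain ⟨CΦ, hCΦ⟩ := hΦb
  obtain ⟨CΨ, hCΨ⟩ := hΨb
  obtain ⟨cΦ, hcΦ0, hcΦ⟩ := hΦc
  obtain ⟨cΨ, hcΨ0, hcΨ⟩ := hΨc
  have hΦ0 : ∀ θ, 0 ≤ Φ θ := fun θ => le_trans hcΦ0.le (hcΦ θ)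
  have hΨ0 : ∀ θ, 0 ≤ Ψ θ := fun θ => le_trans hcΨ0.le (hcΨ θ)
  set t := Real.sqrt (∫ θ, (Real.sqrt (Φ θ) - Real.sqrt (Ψ θ)) ^ 2 ∂muT) with ht
  set S := {r : ℝ | ∃ wφ wψ, IsScalarFactor wφ Φ ∧ IsScalarFactor wψ Ψ ∧
        r = Real.sqrt (∫ θ, ‖wφ θ - wψ θ‖ ^ 2 ∂muT)}
  -- integrability of (√Φ - √Ψ)²
  have hint : Integrable (fun θ => (Real.sqrt (Φ θ) - Real.sqrt (Ψ θ)) ^ 2) muT := by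
    apply integrable_of_bdd ((hΦm.sqrt.sub hΨm.sqrt).pow measurable_const)
      (C := (Real.sqrt CΦ + Real.sqrt CΨ) ^ 2)
    intro θ
    have h1 : Real.sqrt (Φ θ) ≤ Real.sqrt CΦ := Real.sqrt_le_sqrt (hCΦ θ)
    have h2 : Real.sqrt (Ψ θ) ≤ Real.sqrt CΨ := Real.sqrt_le_sqrt (hCΨ θ)
    have h3 : 0 ≤ Real.sqrt (Φ θ) := Real.sqrt_nonneg _
    have h4 : 0 ≤ Real.sqrt (Ψ θ) := Real.sqrt_nonneg _
    rw [abs_of_nonneg (sq_nonneg _)]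
    simp only [Pi.sub_apply]
    nlinarith
  -- t ∈ S
  have htS : t ∈ S := by
    refine ⟨fun θ => (Real.sqrt (Φ θ) : ℂ), fun θ => (Real.sqrt (Ψ θ) : ℂ), ?_, ?_, ?_⟩
    · refine ⟨Complex.measurable_ofReal.comp hΦm.sqrt, ?_, ?_⟩
      · have : (fun θ => ‖((Real.sqrt (Φ θ) : ℝ) : ℂ)‖ ^ 2) = Φ := by
          funext θ
          rw [Complex.norm_real, Real.norm_eq_abs, sq_abs, Real.sq_sqrt (hΦ0 θ)]
        rw [this]
        exact integrable_of_bdd hΦm (C := CΦ) fun θ => by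
          rw [abs_of_nonneg (hΦ0 θ)]; exact hCΦ θ
      · refine ae_of_all _ fun θ => ?_
        rw [Complex.norm_real, Real.norm_eq_abs, sq_abs, Real.sq_sqrt (hΦ0 θ)]
    · refine ⟨Complex.measurable_ofReal.comp hΨm.sqrt, ?_, ?_⟩
      · have : (fun θ => ‖((Real.sqrt (Ψ θ) : ℝ) : ℂ)‖ ^ 2) = Ψ := by
          funext θ
          rw [Complex.norm_real, Real.norm_eq_abs, sq_abs, Real.sq_sqrt (hΨ0 θ)]
        rw [this]
        exact integrable_of_bdd hΨm (C := CΨ) fun θ => by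
          rw [abs_of_nonneg (hΨ0 θ)]; exact hCΨ θ
      · refine ae_of_all _ fun θ => ?_
        rw [Complex.norm_real, Real.norm_eq_abs, sq_abs, Real.sq_sqrt (hΨ0 θ)]
    · rw [ht]
      congr 1
      apply integral_congr_ae
      refine ae_of_all _ fun θ => ?_
      show (Real.sqrt (Φ θ) - Real.sqrt (Ψ θ)) ^ 2 =
        ‖((Real.sqrt (Φ θ) : ℝ) : ℂ) - ((Real.sqrt (Ψ θ) : ℝ) : ℂ)‖ ^ 2
      rw [← Complex.ofReal_sub, Complex.norm_real, Real.norm_eq_abs, sq_abs]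
  -- lower bound
  have hlb : ∀ r ∈ S, t ≤ r := by
    rintro r ⟨wφ, wψ, ⟨hφm, hφi, hφe⟩, ⟨hψm, hψi, hψe⟩, rfl⟩
    apply Real.sqrt_le_sqrt
    have hintR : Integrable (fun θ => ‖wφ θ - wψ θ‖ ^ 2) muT := by
      refine Integrable.mono' ((hφi.const_mul 2).add (hψi.const_mul 2))
        (((hφm.sub hψm).norm.pow measurable_const).aestronglyMeasurable)
        (ae_of_all _ fun θ => ?_)
      simp only [Pi.add_apply]
      rw [Real.norm_eq_abs, abs_of_nonneg (sq_nonneg _)]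
      have h := norm_sub_le (wφ θ) (wψ θ)
      have h1 : (0:ℝ) ≤ ‖wφ θ - wψ θ‖ := norm_nonneg _
      nlinarith [norm_nonneg (wφ θ), norm_nonneg (wψ θ), mul_self_le_mul_self h1 h, sq_nonneg (‖wφ θ‖ - ‖wψ θ‖)]
    refine integral_mono_ae hint hintR ?_
    filter_upwards [hφe, hψe] with θ h1 h2
    have e1 : Real.sqrt (Φ θ) = ‖wφ θ‖ := by
      rw [← h1, Real.sqrt_sq (norm_nonneg _)]
    have e2 : Real.sqrt (Ψ θ) = ‖wψ θ‖ := by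
      rw [← h2, Real.sqrt_sq (norm_nonneg _)]
    rw [e1, e2]
    have h := abs_norm_sub_norm_le (wφ θ) (wψ θ)
    calc (‖wφ θ‖ - ‖wψ θ‖) ^ 2 = |‖wφ θ‖ - ‖wψ θ‖| ^ 2 := (sq_abs _).symm
      _ ≤ ‖wφ θ - wψ θ‖ ^ 2 := by
          exact pow_le_pow_left₀ (abs_nonneg _) h 2
  exact le_antisymm (csInf_le ⟨t, hlb⟩ htS) (le_csInf ⟨t, htS⟩ hlb)
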